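/- A triangle-free graph G is edge-partitionable (its edges can be colored red and blue so that the blue edges form a star forest and every vertex is incident to at most two red edges) if and only if the line graph L(G) is partitionable (its vertices split into a P3-free part and a K3-free part). -/

import Mathlib

open SimpleGraph

variable {V : Type*}

/-- The set `B` induces a `P₃`-free graph (disjoint union of cliques). -/
def P3FreeOn {W : Type*} (G : SimpleGraph W) (B : Set W) : Prop :=
  ∀ a ∈ B, ∀ b ∈ B, ∀ c ∈ B, G.Adj a b → G.Adj b c → a ≠ c → G.Adj a c

/-- The set `R` induces a triangle-free graph. -/
def K3FreeOn {W : Type*} (G : SimpleGraph W) (R : Set W) : Prop :=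
  ∀ a ∈ R, ∀ b ∈ R, ∀ c ∈ R, ¬(G.Adj a b ∧ G.Adj b c ∧ G.Adj a c)

/-- A graph is partitionable if its vertices split into a `P₃`-free part and a
triangle-free part. -/
def Partitionable {W : Type*} (G : SimpleGraph W) : Prop :=
  ∃ B : Set W, P3FreeOn G B ∧ K3FreeOn G Bᶜ

/-- A graph is a star forest iff it has no path on four vertices as a subgraph and
no triangle: every connected component is a star. -/
def IsStarForest (H : SimpleGraph V) : Prop :=
  (∀ a b c d : V, H.Adj a b → H.Adj b c → H.Adj c d → a = c ∨ b = d ∨ a = d) ∧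
    H.CliqueFree 3

/-- A graph is edge-partitionable if its edges can be coloured red and blue so that
the blue edges form a star forest and every vertex is incident to at most two
red edges. -/
def EdgePartitionable (G : SimpleGraph V) : Prop :=
  ∃ Bl : SimpleGraph V, Bl ≤ G ∧ IsStarForest Bl ∧
    ∀ v, {u | G.Adj v u ∧ ¬Bl.Adj v u}.ncard ≤ 2

lemma three_le_ncard_aux {W : Type*} {S : Set W} {a b c : W}
    (hfin : S.Finite)
    (ha : a ∈ S) (hb : b ∈ S) (hc : c ∈ S)
    (hab : a ≠ b) (hac : a ≠ c) (hbc : b ≠ c) : 3 ≤ S.ncard := by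
  have h3 : ({a, b, c} : Set W).ncard = 3 := by
    rw [Set.ncard_eq_three]
    exact ⟨a, b, c, hab, hac, hbc, rfl⟩
  have hsub : ({a, b, c} : Set W) ⊆ S := by
    intro x hx
    simp only [Set.mem_insert_iff, Set.mem_singleton_iff] at hx
    rcases hx with rfl | rfl | rfl <;> assumption
  calc 3 = ({a, b, c} : Set W).ncard := h3.symm
    _ ≤ S.ncard := Set.ncard_le_ncard hsub hfin

lemma exists_three_of_two_lt_ncard {W : Type*} {S : Set W} (h : 2 < S.ncard) :
    ∃ a b c, a ∈ S ∧ b ∈ S ∧ c ∈ S ∧ a ≠ b ∧ a ≠ c ∧ b ≠ c := by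
  classical
  have hfin : S.Finite := by
    by_contra hinf
    rw [Set.Infinite.ncard hinf] at h
    omega
  lift S to Finset W using hfin with s
  rw [Set.ncard_coe_finset] at h
  obtain ⟨t, hts, htc⟩ := Finset.exists_subset_card_eq (s := s) (n := 3) (by omega)
  obtain ⟨a, b, c, hab, hac, hbc, rfl⟩ := Finset.card_eq_three.1 htc
  exact ⟨a, b, c, hts (by simp), hts (by simp), hts (by simp), hab, hac, hbc⟩

theorem stmt13 [Fintype V] (G : SimpleGraph V) (htf : G.CliqueFree 3) :
    EdgePartitionable G ↔ Partitionable G.lineGraph := by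
  classical
  constructor
  · rintro ⟨Bl, hle, ⟨hpath, _hcf⟩, hdeg⟩
    refine ⟨{e : G.edgeSet | (e : Sym2 V) ∈ Bl.edgeSet}, ?_, ?_⟩
    · -- P3-free on blue edges
      intro e he f hf g hg hef hfg heg
      rw [lineGraph_adj_iff_exists] at hef hfg ⊢
      obtain ⟨hef', x, hxe, hxf⟩ := hef
      obtain ⟨hfg', y, hyf, hyg⟩ := hfg
      refine ⟨heg, ?_⟩
      obtain ⟨a, hea⟩ := Sym2.mem_iff_exists.1 hxe
      obtain ⟨c, hfc⟩ := Sym2.mem_iff_exists.1 hxf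
      -- y ∈ f = s(x,c)
      rw [hfc, Sym2.mem_iff] at hyf
      rcases hyf with rfl | rfl
      · exact ⟨y, hxe, hyg⟩
      · -- f and g share c=y ; write g = s(y,d)
        obtain ⟨d, hgd⟩ := Sym2.mem_iff_exists.1 hyg
        have hBxa : Bl.Adj x a := by
          have := he; rw [Set.mem_setOf_eq, hea, mem_edgeSet] at this; exact this
        have hBxc : Bl.Adj x y := by
          have := hf; rw [Set.mem_setOf_eq, hfc, mem_edgeSet] at this; exact this
        have hBcd : Bl.Adj y d := by
          have := hg; rw [Set.mem_setOf_eq, hgd, mem_edgeSet] at this; exact this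
        rcases hpath a x y d hBxa.symm hBxc hBcd with h | h | h
        · -- a = y : a ∈ e ∩ g
          refine ⟨a, by rw [hea]; simp, by rw [h, hgd]; simp⟩
        · -- x = d
          refine ⟨x, hxe, by rw [hgd, h]; simp⟩
        · -- a = d
          refine ⟨a, by rw [hea]; simp, by rw [hgd, h]; simp⟩
    · -- K3-free on red edges
      intro e he f hf g hg
      rintro ⟨hef, hfg, heg⟩
      rw [lineGraph_adj_iff_exists] at hef hfg heg
      obtain ⟨hef', x, hxe, hxf⟩ := hef
      obtain ⟨hfg', y, hyf, hyg⟩ := hfg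
      obtain ⟨heg', z, hze, hzg⟩ := heg
      obtain ⟨a, hea⟩ := Sym2.mem_iff_exists.1 hxe
      obtain ⟨b, hfb⟩ := Sym2.mem_iff_exists.1 hxf
      have hab : a ≠ b := by
        intro h; apply hef'; apply Subtype.ext; rw [hea, hfb, h]
      -- red facts
      have hre : ¬Bl.Adj x a := by
        intro h; apply he; rw [Set.mem_setOf_eq, hea, mem_edgeSet]; exact h
      have hrf : ¬Bl.Adj x b := by
        intro h; apply hf; rw [Set.mem_setOf_eq, hfb, mem_edgeSet]; exact h
      have hGxa : G.Adj x a := by have := e.2; rwa [hea, mem_edgeSet] at this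
      have hGxb : G.Adj x b := by have := f.2; rwa [hfb, mem_edgeSet] at this
      -- case on where g meets e and f
      rw [hea, Sym2.mem_iff] at hze
      rw [hfb, Sym2.mem_iff] at hyf
      have hcommon : x ∈ (g : Sym2 V) → False := by
        intro hxg
        obtain ⟨c, hgc⟩ := Sym2.mem_iff_exists.1 hxg
        have hGxc : G.Adj x c := by have := g.2; rwa [hgc, mem_edgeSet] at this
        have hrg : ¬Bl.Adj x c := by
          intro h; apply hg; rw [Set.mem_setOf_eq, hgc, mem_edgeSet]; exact h
        have hac : a ≠ c := by
          intro h; apply heg'; apply Subtype.ext; rw [hea, hgc, h]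
        have hbc : b ≠ c := by
          intro h; apply hfg'; apply Subtype.ext; rw [hfb, hgc, h]
        have h3 : 3 ≤ {u | G.Adj x u ∧ ¬Bl.Adj x u}.ncard :=
          three_le_ncard_aux (Set.toFinite _)
            ⟨hGxa, hre⟩ ⟨hGxb, hrf⟩ ⟨hGxc, hrg⟩ hab hac hbc
        have := hdeg x
        omega
      rcases hze with hz | hz
      · exact hcommon (hz ▸ hzg)
      rcases hyf with hy | hy
      · exact hcommon (hy ▸ hyg)
      · -- g contains a and b : triangle x a b
        have hag : a ∈ (g : Sym2 V) := hz ▸ hzg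
        have hbg : b ∈ (g : Sym2 V) := hy ▸ hyg
        have hgab : (g : Sym2 V) = s(a, b) := by
          obtain ⟨d, hgd⟩ := Sym2.mem_iff_exists.1 hag
          rw [hgd, Sym2.mem_iff] at hbg
          rcases hbg with h | h
          · exact absurd h.symm hab
          · rw [hgd, h]
        have hGab : G.Adj a b := by have := g.2; rwa [hgab, mem_edgeSet] at this
        exact htf {x, a, b} (is3Clique_triple_iff.2 ⟨hGxa, hGxb, hGab⟩)
  · rintro ⟨B, hB, hR⟩
    let S : Set (Sym2 V) := Subtype.val '' B
    have hSmem : ∀ {u v : V} (h : G.Adj u v),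
        s(u, v) ∈ S ↔ (⟨s(u, v), h⟩ : G.edgeSet) ∈ B := by
      intro u v h
      constructor
      · rintro ⟨b, hbB, hbeq⟩
        have : b = ⟨s(u, v), h⟩ := Subtype.ext hbeq
        rwa [this] at hbB
      · intro hb; exact ⟨_, hb, rfl⟩
    refine ⟨{ Adj := fun u v => G.Adj u v ∧ s(u, v) ∈ S
              symm := by
                refine ⟨?_⟩; rintro u v ⟨h1, h2⟩
                exact ⟨h1.symm, by rwa [Sym2.eq_swap]⟩
              loopless := ⟨by rintro v ⟨h1, _⟩; exact G.loopless.irrefl v h1⟩ }, ?_, ⟨?_, ?_⟩, ?_⟩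
    · intro u v h; exact h.1
    · -- star forest path condition
      intro a b c d hab hbc hcd
      by_contra hcon
      push_neg at hcon
      obtain ⟨hac, hbd, had⟩ := hcon
      obtain ⟨hGab, hSab⟩ := hab
      obtain ⟨hGbc, hSbc⟩ := hbc
      obtain ⟨hGcd, hScd⟩ := hcd
      have heB := (hSmem hGab).1 hSab
      have hfB := (hSmem hGbc).1 hSbc
      have hgB := (hSmem hGcd).1 hScd
      have hadj := hB _ heB _ hfB _ hgB ?_ ?_ ?_
      · rw [lineGraph_adj_iff_exists] at hadj
        obtain ⟨_, v, hv1, hv2⟩ := hadj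
        simp only [Sym2.mem_iff] at hv1 hv2
        rcases hv1 with rfl | rfl <;> rcases hv2 with rfl | rfl
        · exact hac rfl
        · exact had rfl
        · exact G.loopless.irrefl _ hGbc
        · exact hbd rfl
      · rw [lineGraph_adj_iff_exists]
        refine ⟨?_, b, by simp, by simp⟩
        intro h
        have := Subtype.ext_iff.1 h
        rw [Sym2.eq_iff] at this
        rcases this with ⟨h1, _⟩ | ⟨h1, _⟩
        · exact G.loopless.irrefl _ (h1 ▸ hGab)
        · exact hac h1
      · rw [lineGraph_adj_iff_exists]
        refine ⟨?_, c, by simp, by simp⟩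
        intro h
        have := Subtype.ext_iff.1 h
        rw [Sym2.eq_iff] at this
        rcases this with ⟨h1, _⟩ | ⟨h1, _⟩
        · exact G.loopless.irrefl _ (h1 ▸ hGbc)
        · exact hbd h1
      · intro h
        have := Subtype.ext_iff.1 h
        rw [Sym2.eq_iff] at this
        rcases this with ⟨h1, _⟩ | ⟨h1, _⟩
        · exact hac h1
        · exact had h1
    · -- clique free
      exact CliqueFree.anti (fun u v h => h.1) htf
    · -- red degree at most 2
      intro v
      by_contra hcon
      push_neg at hcon
      obtain ⟨a, b, c, ha, hb, hc, hab, hac, hbc⟩ := exists_three_of_two_lt_ncard hcon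
      obtain ⟨hGa, hNa⟩ := ha
      obtain ⟨hGb, hNb⟩ := hb
      obtain ⟨hGc, hNc⟩ := hc
      have hSa : s(v, a) ∉ S := fun h => hNa ⟨hGa, h⟩
      have hSb : s(v, b) ∉ S := fun h => hNb ⟨hGb, h⟩
      have hSc : s(v, c) ∉ S := fun h => hNc ⟨hGc, h⟩
      have heR : (⟨s(v, a), hGa⟩ : G.edgeSet) ∈ Bᶜ := fun h => hSa ((hSmem hGa).2 h)
      have hfR : (⟨s(v, b), hGb⟩ : G.edgeSet) ∈ Bᶜ := fun h => hSb ((hSmem hGb).2 h)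
      have hgR : (⟨s(v, c), hGc⟩ : G.edgeSet) ∈ Bᶜ := fun h => hSc ((hSmem hGc).2 h)
      refine hR _ heR _ hfR _ hgR ⟨?_, ?_, ?_⟩
      all_goals rw [lineGraph_adj_iff_exists]
      · refine ⟨?_, v, by simp, by simp⟩
        intro h
        have := Subtype.ext_iff.1 h
        rw [Sym2.eq_iff] at this
        rcases this with ⟨_, h2⟩ | ⟨_, h2⟩
        · exact hab h2
        · exact G.loopless.irrefl v (h2 ▸ hGa)
      · refine ⟨?_, v, by simp, by simp⟩
        intro h
        have := Subtype.ext_iff.1 h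
        rw [Sym2.eq_iff] at this
        rcases this with ⟨_, h2⟩ | ⟨_, h2⟩
        · exact hbc h2
        · exact G.loopless.irrefl v (h2 ▸ hGb)
      · refine ⟨?_, v, by simp, by simp⟩
        intro h
        have := Subtype.ext_iff.1 h
        rw [Sym2.eq_iff] at this
        rcases this with ⟨_, h2⟩ | ⟨_, h2⟩
        · exact hac h2
        · exact G.loopless.irrefl v (h2 ▸ hGa)
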